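/- Let V_0 : ℤ → ℝ and let φ_0 : ℤ → ℝ be a nowhere-vanishing sequence with −Δ²φ_0(n) + V_0(n)φ_0(n) = 0 for all n ∈ ℤ. Set f_1(n) = Δφ_0(n)/φ_0(n) and V_1(n) = V_0(n+1) − 2Δf_1(n+1). Then for all n ∈ ℤ: V_0(n) = Δf_1(n) + f_1(n)f_1(n+1) and V_1(n) = −Δf_1(n+1) + f_1(n+1)f_1(n+2); equivalently, for every sequence ψ : ℤ → ℝ, H_0ψ(n) equals the result of applying first the operator (−Δ + f_1(n)·) and then (Δ + f_1(n+1)·) to ψ, and H_1ψ(n) equals the result of applying first (Δ + f_1(n+1)·) and then (−Δ + f_1(n+2)·) to ψ. -/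

import Mathlib

/-- For a nowhere-vanishing zero mode φ₀ of H₀ and f₁ = Δφ₀/φ₀,
V₁(n) = V₀(n+1) − 2Δf₁(n+1), one has the factorizations
V₀(n) = Δf₁(n) + f₁(n)f₁(n+1), V₁(n) = −Δf₁(n+1) + f₁(n+1)f₁(n+2), and
equivalently H₀ = (Δ + f₁(n+1))(−Δ + f₁(n)), H₁ = (−Δ + f₁(n+2))(Δ + f₁(n+1)). -/
theorem stmt_5 (V0 : ℤ → ℝ) (φ0 : ℤ → ℝ)
    (hne : ∀ n : ℤ, φ0 n ≠ 0)
    (hφ0 : ∀ n : ℤ, -(φ0 (n+2) - 2 * φ0 (n+1) + φ0 n) + V0 n * φ0 n = 0)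
    (f1 : ℤ → ℝ)
    (hf : ∀ n : ℤ, f1 n = (φ0 (n+1) - φ0 n) / φ0 n)
    (V1 : ℤ → ℝ)
    (hV1 : ∀ n : ℤ, V1 n = V0 (n+1) - 2 * (f1 (n+2) - f1 (n+1))) :
    (∀ n : ℤ, V0 n = (f1 (n+1) - f1 n) + f1 n * f1 (n+1)) ∧
    (∀ n : ℤ, V1 n = -(f1 (n+2) - f1 (n+1)) + f1 (n+1) * f1 (n+2)) ∧
    (∀ ψ χ : ℤ → ℝ, (∀ m : ℤ, χ m = -(ψ (m+1) - ψ m) + f1 m * ψ m) →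
      ∀ n : ℤ, -(ψ (n+2) - 2 * ψ (n+1) + ψ n) + V0 n * ψ n
        = (χ (n+1) - χ n) + f1 (n+1) * χ n) ∧
    (∀ ψ η : ℤ → ℝ, (∀ m : ℤ, η m = (ψ (m+1) - ψ m) + f1 (m+1) * ψ m) →
      ∀ n : ℤ, -(ψ (n+2) - 2 * ψ (n+1) + ψ n) + V1 n * ψ n
        = -(η (n+1) - η n) + f1 (n+2) * η n) := by
  have key : ∀ n : ℤ, V0 n = (f1 (n+1) - f1 n) + f1 n * f1 (n+1) := by
    intro n
    have h0 := hφ0 n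
    have h1 := hf n
    have h2 := hf (n+1)
    have e : n+1+1 = n+2 := by ring
    rw [e] at h2
    rw [h1, h2]
    have hn := hne n
    have hn1 := hne (n+1)
    field_simp
    linear_combination (φ0 (n+1)) * h0
  have key2 : ∀ n : ℤ, V1 n = -(f1 (n+2) - f1 (n+1)) + f1 (n+1) * f1 (n+2) := by
    intro n
    have k := key (n+1)
    have e1 : n+1+1 = n+2 := by ring
    rw [e1] at k
    rw [hV1 n, k]
    ring
  refine ⟨key, key2, ?_, ?_⟩
  · intro ψ χ hχ n
    rw [key n, hχ n, hχ (n+1)]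
    have e1 : n+1+1 = n+2 := by ring
    rw [e1]
    ring
  · intro ψ η hη n
    rw [key2 n, hη n, hη (n+1)]
    have e1 : n+1+1 = n+2 := by ring
    rw [e1]
    ring
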